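/- arXiv:2605.07629 — 2 statements merged into one kernel-verified Lean document; each statement's English description precedes it below -/
import Mathlib

section
/- Let β : ℝ → ℂ be smooth with support contained in (1/2, 2). For every positive integer N there is a constant C_N (depending only on β and N) such that for all λ ≥ 1, all δ ∈ (0, 1/2), all j ∈ ℤ, and all τ ≥ 0, the symbol m_j(τ) = (i(λ+iδ))⁻¹ ∫₀^∞ β(2^{−j} t) e^{itλ − tδ} cos(tτ) dt (an absolutely convergent integral) satisfies |m_j(τ)| ≤ C_N λ^{−1} 2^j (1 + 2^j |τ − λ|)^{−N}. -/
open MeasureTheory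
open scoped ENNReal

noncomputable section

/-- The symbol of the dyadic-in-time resolvent piece, with a complex-valued cutoff `β`:
`m_j(τ) = (i(λ+iδ))⁻¹ ∫₀^∞ β(2^{−j}t) e^{itλ − tδ} cos(tτ) dt`. -/
noncomputable def msymC (β : ℝ → ℂ) (lam δ : ℝ) (j : ℤ) (τ : ℝ) : ℂ :=
  (Complex.I * ((lam : ℂ) + Complex.I * (δ : ℂ)))⁻¹ *
    ∫ t in Set.Ioi (0:ℝ),
      β ((2:ℝ) ^ (-j) * t) *
        Complex.exp (Complex.I * ((t * lam : ℝ) : ℂ) - ((t * δ : ℝ) : ℂ)) *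
        Complex.cos (((t * τ : ℝ) : ℂ))

lemma tsupport_iteratedDeriv_subset' (f : ℝ → ℂ) (n : ℕ) :
    tsupport (iteratedDeriv n f) ⊆ tsupport f := by
  induction n with
  | zero => simp [iteratedDeriv_zero]
  | succ n ih =>
    rw [iteratedDeriv_succ]
    exact (closure_minimal support_deriv_subset (isClosed_tsupport _)).trans ih

lemma ibp_step (F : ℝ → ℂ) (hF : ContDiff ℝ (⊤ : ℕ∞) F)
    (hsupp : tsupport F ⊆ Set.Ioo (1/2 : ℝ) 2) (w : ℂ) (hw : w ≠ 0) :
    ∫ s in (0:ℝ)..2, F s * Complex.exp (w * s)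
      = -w⁻¹ * ∫ s in (0:ℝ)..2, deriv F s * Complex.exp (w * s) := by
  have hder : ∀ x : ℝ, HasDerivAt (fun s : ℝ => Complex.exp (w * s)) (w * Complex.exp (w * x)) x := by
    intro x
    have h0 : HasDerivAt (fun s : ℝ => ((s : ℂ))) 1 x := Complex.ofRealCLM.hasDerivAt
    have h1 : HasDerivAt (fun s : ℝ => w * (s : ℂ)) w x := by simpa using h0.const_mul w
    simpa [mul_comm] using h1.cexp
  have hv : ∀ x ∈ Set.uIcc (0:ℝ) 2,
      HasDerivAt (fun s : ℝ => w⁻¹ * Complex.exp (w * s)) (Complex.exp (w * x)) x := by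
    intro x _
    have := (hder x).const_mul w⁻¹
    simpa [← mul_assoc, inv_mul_cancel₀ hw] using this
  have hu : ∀ x ∈ Set.uIcc (0:ℝ) 2, HasDerivAt F (deriv F x) x := fun x _ =>
    (hF.differentiable (by simp) x).hasDerivAt
  have hcont : Continuous (deriv F) := (hF.iterate_deriv 1).continuous
  have hexp : Continuous fun s : ℝ => Complex.exp (w * s) := by fun_prop
  have key := intervalIntegral.integral_mul_deriv_eq_deriv_mul hu hv
    (hcont.intervalIntegrable _ _) (hexp.intervalIntegrable _ _)
  have hF0 : F 0 = 0 := image_eq_zero_of_notMem_tsupport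
    (fun h => absurd (hsupp h) (by norm_num [Set.mem_Ioo]))
  have hF2 : F 2 = 0 := image_eq_zero_of_notMem_tsupport
    (fun h => absurd (hsupp h) (by norm_num [Set.mem_Ioo]))
  rw [key, hF0, hF2]
  rw [show (∫ x in (0:ℝ)..2, deriv F x * (w⁻¹ * Complex.exp (w * x)))
      = w⁻¹ * ∫ x in (0:ℝ)..2, deriv F x * Complex.exp (w * x) by
    rw [← intervalIntegral.integral_const_mul]; congr 1; ext x; ring]
  ring

lemma ibp_iter (F : ℝ → ℂ) (hF : ContDiff ℝ (⊤ : ℕ∞) F)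
    (hsupp : tsupport F ⊆ Set.Ioo (1/2 : ℝ) 2) (w : ℂ) (hw : w ≠ 0) (N : ℕ) :
    ∫ s in (0:ℝ)..2, F s * Complex.exp (w * s)
      = (-w⁻¹) ^ N * ∫ s in (0:ℝ)..2, iteratedDeriv N F s * Complex.exp (w * s) := by
  induction N with
  | zero => simp [iteratedDeriv_zero]
  | succ n ih =>
    rw [ih]
    have hFn : ContDiff ℝ (⊤ : ℕ∞) (iteratedDeriv n F) := by
      rw [iteratedDeriv_eq_iterate]; exact hF.iterate_deriv n
    have hsn : tsupport (iteratedDeriv n F) ⊆ Set.Ioo (1/2 : ℝ) 2 :=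
      (tsupport_iteratedDeriv_subset' F n).trans hsupp
    rw [ibp_step (iteratedDeriv n F) hFn hsn w hw, ← iteratedDeriv_succ]
    ring

lemma key_bound (β : ℝ → ℂ) (hβ : ContDiff ℝ (⊤ : ℕ∞) β)
    (hβsupp : tsupport β ⊆ Set.Ioo (1/2 : ℝ) 2) (N : ℕ) :
    ∃ C : ℝ, 0 < C ∧ ∀ w : ℂ, w ≠ 0 → w.re ≤ 0 →
      ‖∫ s in Set.Ioi (0:ℝ), β s * Complex.exp (w * s)‖ ≤ C * min 1 (‖w‖⁻¹ ^ N) := by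
  have hcsβ : HasCompactSupport β :=
    IsCompact.of_isClosed_subset isCompact_Icc (isClosed_tsupport β)
      (hβsupp.trans Set.Ioo_subset_Icc_self)
  obtain ⟨M0, hM0⟩ := hcsβ.exists_bound_of_continuous hβ.continuous
  have hβN : ContDiff ℝ (⊤ : ℕ∞) (iteratedDeriv N β) := by
    rw [iteratedDeriv_eq_iterate]; exact hβ.iterate_deriv N
  have hcsN : HasCompactSupport (iteratedDeriv N β) :=
    IsCompact.of_isClosed_subset hcsβ (isClosed_tsupport _) (tsupport_iteratedDeriv_subset' β N)
  obtain ⟨MN, hMN⟩ := hcsN.exists_bound_of_continuous hβN.continuous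
  have hM0' : 0 ≤ M0 := le_trans (norm_nonneg _) (hM0 0)
  have hMN' : 0 ≤ MN := le_trans (norm_nonneg _) (hMN 0)
  refine ⟨2 * M0 + 2 * MN + 1, by positivity, ?_⟩
  intro w hw hwre
  set C := 2 * M0 + 2 * MN + 1 with hC
  -- convert to interval integral
  have hexp_le : ∀ x ∈ Set.uIoc (0:ℝ) 2, ‖Complex.exp (w * x)‖ ≤ 1 := by
    intro x hx
    rw [Set.uIoc_of_le (by norm_num)] at hx
    rw [Complex.norm_exp]
    apply Real.exp_le_one_iff.2
    have : (w * (x:ℂ)).re = w.re * x := by simp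
    rw [this]
    exact mul_nonpos_of_nonpos_of_nonneg hwre hx.1.le
  have hsupp2 : Function.support (fun s : ℝ => β s * Complex.exp (w * s)) ⊆ Set.Ioc 0 2 := by
    intro x hx
    have hβx : β x ≠ 0 := fun h' => hx (by simp [h'])
    have hxm := hβsupp (subset_closure hβx)
    exact ⟨lt_trans (by norm_num) hxm.1, hxm.2.le⟩
  have heq : (∫ s in Set.Ioi (0:ℝ), β s * Complex.exp (w * s))
      = ∫ s in (0:ℝ)..2, β s * Complex.exp (w * s) := by
    rw [setIntegral_eq_integral_of_forall_compl_eq_zero (fun x hx => ?_),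
      intervalIntegral.integral_eq_integral_of_support_subset hsupp2]
    have : β x = 0 := by
      by_contra h
      have := hβsupp (subset_closure h)
      simp only [Set.mem_Ioi, not_lt] at hx
      linarith [this.1]
    simp [this]
  -- trivial bound
  have bound1 : ‖∫ s in Set.Ioi (0:ℝ), β s * Complex.exp (w * s)‖ ≤ 2 * M0 := by
    rw [heq]
    have := intervalIntegral.norm_integral_le_of_norm_le_const
      (a := 0) (b := 2) (C := M0) (f := fun s => β s * Complex.exp (w * s)) ?_
    · simpa [mul_comm] using this
    · intro x hx
      rw [norm_mul]
      calc ‖β x‖ * ‖Complex.exp (w * x)‖ ≤ M0 * 1 :=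
        mul_le_mul (hM0 x) (hexp_le x hx) (norm_nonneg _) hM0'
      _ = M0 := mul_one _
  -- IBP bound
  have bound2 : ‖∫ s in Set.Ioi (0:ℝ), β s * Complex.exp (w * s)‖ ≤ ‖w‖⁻¹ ^ N * (2 * MN) := by
    rw [heq, ibp_iter β hβ hβsupp w hw N, norm_mul]
    have h1 : ‖(-w⁻¹) ^ N‖ = ‖w‖⁻¹ ^ N := by
      rw [norm_pow, norm_neg, norm_inv]
    rw [h1]
    apply mul_le_mul_of_nonneg_left ?_ (by positivity)
    have := intervalIntegral.norm_integral_le_of_norm_le_const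
      (a := 0) (b := 2) (C := MN) (f := fun s => iteratedDeriv N β s * Complex.exp (w * s)) ?_
    · simpa [mul_comm] using this
    · intro x hx
      rw [norm_mul]
      calc ‖iteratedDeriv N β x‖ * ‖Complex.exp (w * x)‖ ≤ MN * 1 :=
        mul_le_mul (hMN x) (hexp_le x hx) (norm_nonneg _) hMN'
      _ = MN := mul_one _
  rw [hC]
  rcases min_cases 1 (‖w‖⁻¹ ^ N) with ⟨hmin, _⟩ | ⟨hmin, hlt⟩
  · rw [hmin]
    calc ‖_‖ ≤ 2 * M0 := bound1
    _ ≤ (2 * M0 + 2 * MN + 1) * 1 := by nlinarith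
  · rw [hmin]
    calc ‖_‖ ≤ ‖w‖⁻¹ ^ N * (2 * MN) := bound2
    _ ≤ (2 * M0 + 2 * MN + 1) * (‖w‖⁻¹ ^ N) := by nlinarith [pow_nonneg (inv_nonneg.2 (norm_nonneg w)) N]

lemma min_bound {x r : ℝ} (hx : 0 ≤ x) (hr : x ≤ r) (N : ℕ) :
    min 1 (r⁻¹ ^ N) ≤ 2 ^ N * ((1 + x) ^ N)⁻¹ := by
  have h1x : (0:ℝ) < 1 + x := by linarith
  rw [← div_eq_mul_inv, le_div_iff₀ (pow_pos h1x N)]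
  rcases le_total x 1 with h | h
  · calc min 1 (r⁻¹ ^ N) * (1 + x) ^ N ≤ 1 * (1 + x) ^ N :=
        mul_le_mul_of_nonneg_right (min_le_left _ _) (by positivity)
    _ ≤ 2 ^ N := by
        rw [one_mul]
        exact pow_le_pow_left₀ (by linarith) (by linarith) N
  · have hx1 : (0:ℝ) < x := lt_of_lt_of_le one_pos h
    have hr0 : (0:ℝ) < r := lt_of_lt_of_le hx1 hr
    have h1 : min 1 (r⁻¹ ^ N) ≤ x⁻¹ ^ N :=
      le_trans (min_le_right _ _)
        (pow_le_pow_left₀ (by positivity) (inv_anti₀ hx1 hr) N)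
    have h2 : (1 + x) ^ N ≤ (2 * x) ^ N := pow_le_pow_left₀ (by linarith) (by linarith) N
    have h3 : x⁻¹ ^ N * (2 * x) ^ N = 2 ^ N := by
      rw [← mul_pow, show x⁻¹ * (2 * x) = 2 by field_simp]
    calc min 1 (r⁻¹ ^ N) * (1 + x) ^ N ≤ x⁻¹ ^ N * (2 * x) ^ N :=
          mul_le_mul h1 h2 (by positivity) (by positivity)
      _ = 2 ^ N := h3

lemma g_integrable (β : ℝ → ℂ) (hβ : ContDiff ℝ (⊤ : ℕ∞) β)
    (hβsupp : tsupport β ⊆ Set.Ioo (1/2 : ℝ) 2) (j : ℤ) (z : ℂ) :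
    IntegrableOn (fun t : ℝ => β ((2:ℝ) ^ (-j) * t) * Complex.exp (z * t)) (Set.Ioi 0) := by
  have h2j : ((2:ℝ) ^ (-j)) ≠ 0 := by positivity
  have hcont : Continuous fun t : ℝ => β ((2:ℝ) ^ (-j) * t) * Complex.exp (z * t) :=
    (hβ.continuous.comp (continuous_const.mul continuous_id)).mul
      (Complex.continuous_exp.comp (continuous_const.mul Complex.continuous_ofReal))
  have hcsβ : HasCompactSupport β :=
    IsCompact.of_isClosed_subset isCompact_Icc (isClosed_tsupport β)
      (hβsupp.trans Set.Ioo_subset_Icc_self)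
  have hcs1 : HasCompactSupport fun t : ℝ => β ((2:ℝ) ^ (-j) * t) := by
    have := hcsβ.comp_homeomorph (Homeomorph.mulLeft₀ ((2:ℝ) ^ (-j)) h2j)
    simpa [Function.comp_def] using this
  have hcs : HasCompactSupport fun t : ℝ => β ((2:ℝ) ^ (-j) * t) * Complex.exp (z * t) :=
    hcs1.mul_right
  exact (hcont.integrable_of_hasCompactSupport hcs).integrableOn

lemma Iz_bound (β : ℝ → ℂ) (hβ : ContDiff ℝ (⊤ : ℕ∞) β)
    (hβsupp : tsupport β ⊆ Set.Ioo (1/2 : ℝ) 2) (N : ℕ) :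
    ∃ C : ℝ, 0 < C ∧ ∀ (j : ℤ) (z : ℂ), z ≠ 0 → z.re ≤ 0 →
      ‖∫ t in Set.Ioi (0:ℝ), β ((2:ℝ) ^ (-j) * t) * Complex.exp (z * t)‖
        ≤ C * (2:ℝ) ^ j * min 1 (((2:ℝ) ^ j * ‖z‖)⁻¹ ^ N) := by
  obtain ⟨C, hCpos, hC⟩ := key_bound β hβ hβsupp N
  refine ⟨C, hCpos, fun j z hz hzre => ?_⟩
  have h2j : (0:ℝ) < (2:ℝ) ^ (-j) := by positivity
  have h2j' : (0:ℝ) < (2:ℝ) ^ j := by positivity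
  set w : ℂ := (((2:ℝ) ^ j : ℝ) : ℂ) * z with hw
  have hzz : (((2:ℝ) ^ j : ℝ) : ℂ) * (((2:ℝ) ^ (-j) : ℝ) : ℂ) = 1 := by
    rw [← Complex.ofReal_mul, ← zpow_add₀ (by norm_num : (2:ℝ) ≠ 0)]
    simp
  have hcomp : ∀ t : ℝ, β ((2:ℝ) ^ (-j) * t) * Complex.exp (z * t)
      = (fun s : ℝ => β s * Complex.exp (w * s)) ((2:ℝ) ^ (-j) * t) := by
    intro t
    show _ = β _ * Complex.exp (w * (((2:ℝ) ^ (-j) * t : ℝ) : ℂ))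
    congr 1
    rw [Complex.ofReal_mul,
      show w * ((((2:ℝ) ^ (-j) : ℝ) : ℂ) * (t : ℂ))
        = ((((2:ℝ) ^ j : ℝ) : ℂ) * (((2:ℝ) ^ (-j) : ℝ) : ℂ)) * (z * t) by rw [hw]; ring,
      hzz, one_mul]
  have hchg : (∫ t in Set.Ioi (0:ℝ), β ((2:ℝ) ^ (-j) * t) * Complex.exp (z * t))
      = ((2:ℝ) ^ (-j))⁻¹ • ∫ s in Set.Ioi (0:ℝ), β s * Complex.exp (w * s) := by
    simp_rw [hcomp]
    have := MeasureTheory.integral_comp_mul_left_Ioi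
      (fun s : ℝ => β s * Complex.exp (w * s)) 0 h2j
    rw [mul_zero] at this
    exact this
  have hwnorm : ‖w‖ = (2:ℝ) ^ j * ‖z‖ := by
    rw [hw, norm_mul, Complex.norm_real, Real.norm_eq_abs, abs_of_pos h2j']
  have hwne : w ≠ 0 := by
    rw [hw]
    exact mul_ne_zero (by exact_mod_cast (Complex.ofReal_ne_zero.2 (ne_of_gt h2j'))) hz
  have hwre : w.re ≤ 0 := by
    rw [hw, Complex.re_ofReal_mul]
    exact mul_nonpos_of_nonneg_of_nonpos h2j'.le hzre
  rw [hchg, norm_smul, Real.norm_eq_abs, abs_of_pos (inv_pos.2 h2j), ← zpow_neg, neg_neg]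
  calc (2:ℝ) ^ j * ‖∫ s in Set.Ioi (0:ℝ), β s * Complex.exp (w * s)‖
      ≤ (2:ℝ) ^ j * (C * min 1 (‖w‖⁻¹ ^ N)) :=
        mul_le_mul_of_nonneg_left (hC w hwne hwre) h2j'.le
    _ = C * (2:ℝ) ^ j * min 1 (((2:ℝ) ^ j * ‖z‖)⁻¹ ^ N) := by rw [hwnorm]; ring

/-- Stationary-phase bound for the symbol of the dyadic resolvent
pieces:  `|m_j(τ)| ≤ C_N λ^{−1} 2^j (1 + 2^j |τ − λ|)^{−N}`, uniformly in `δ` and `j`. -/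
theorem statement6
    (β : ℝ → ℂ) (hβ : ContDiff ℝ (⊤ : ℕ∞) β)
    (hβsupp : tsupport β ⊆ Set.Ioo (1/2 : ℝ) 2) :
    ∀ N : ℕ, 0 < N → ∃ C : ℝ, 0 < C ∧
      ∀ lam : ℝ, 1 ≤ lam → ∀ δ : ℝ, 0 < δ → δ < 1/2 →
        ∀ j : ℤ, ∀ τ : ℝ, 0 ≤ τ →
          ‖msymC β lam δ j τ‖ ≤
            C * lam⁻¹ * (2:ℝ) ^ j * ((1 + (2:ℝ) ^ j * |τ - lam|) ^ N)⁻¹ := by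
  intro N _
  obtain ⟨C0, hC0pos, hC0⟩ := Iz_bound β hβ hβsupp N
  refine ⟨C0 * 2 ^ N, by positivity, ?_⟩
  intro lam hlam δ hδ hδ2 j τ hτ
  have hlam0 : (0:ℝ) < lam := by linarith
  have h2j : (0:ℝ) < (2:ℝ) ^ j := by positivity
  set zp : ℂ := Complex.I * ((lam : ℂ) + (τ : ℂ)) - (δ : ℂ) with hzp
  set zm : ℂ := Complex.I * ((lam : ℂ) - (τ : ℂ)) - (δ : ℂ) with hzm
  have hzpre : zp.re = -δ := by simp [hzp]
  have hzmre : zm.re = -δ := by simp [hzm]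
  have hzpne : zp ≠ 0 := fun h => by
    have := congrArg Complex.re h
    rw [hzpre] at this; simp at this; linarith
  have hzmne : zm ≠ 0 := fun h => by
    have := congrArg Complex.re h
    rw [hzmre] at this; simp at this; linarith
  have hzpim : zp.im = lam + τ := by simp [hzp]
  have hzmim : zm.im = lam - τ := by simp [hzm]
  have habs : |τ - lam| ≤ lam + τ := by
    rw [abs_sub_le_iff]; constructor <;> linarith
  have hzpge : |τ - lam| ≤ ‖zp‖ := by
    calc |τ - lam| ≤ lam + τ := habs
    _ = |zp.im| := by rw [hzpim, abs_of_nonneg (by linarith)]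
    _ ≤ ‖zp‖ := Complex.abs_im_le_norm zp
  have hzmge : |τ - lam| ≤ ‖zm‖ := by
    calc |τ - lam| = |zm.im| := by rw [hzmim, abs_sub_comm]
    _ ≤ ‖zm‖ := Complex.abs_im_le_norm zm
  -- pointwise splitting of the integrand
  have hpt : ∀ t : ℝ,
      β ((2:ℝ) ^ (-j) * t) *
        Complex.exp (Complex.I * ((t * lam : ℝ) : ℂ) - ((t * δ : ℝ) : ℂ)) *
        Complex.cos (((t * τ : ℝ) : ℂ))
      = (2:ℂ)⁻¹ * (β ((2:ℝ) ^ (-j) * t) * Complex.exp (zp * t)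
          + β ((2:ℝ) ^ (-j) * t) * Complex.exp (zm * t)) := by
    intro t
    rw [Complex.cos,
      show zp * t = (Complex.I * ((t * lam : ℝ) : ℂ) - ((t * δ : ℝ) : ℂ))
          + ((t * τ : ℝ) : ℂ) * Complex.I by rw [hzp]; push_cast; ring,
      show zm * t = (Complex.I * ((t * lam : ℝ) : ℂ) - ((t * δ : ℝ) : ℂ))
          + -((t * τ : ℝ) : ℂ) * Complex.I by rw [hzm]; push_cast; ring,
      Complex.exp_add, Complex.exp_add]
    ring
  have hintp := g_integrable β hβ hβsupp j zp
  have hintm := g_integrable β hβ hβsupp j zm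
  have hsplit : (∫ t in Set.Ioi (0:ℝ),
      β ((2:ℝ) ^ (-j) * t) *
        Complex.exp (Complex.I * ((t * lam : ℝ) : ℂ) - ((t * δ : ℝ) : ℂ)) *
        Complex.cos (((t * τ : ℝ) : ℂ)))
      = (2:ℂ)⁻¹ * ((∫ t in Set.Ioi (0:ℝ), β ((2:ℝ) ^ (-j) * t) * Complex.exp (zp * t))
          + (∫ t in Set.Ioi (0:ℝ), β ((2:ℝ) ^ (-j) * t) * Complex.exp (zm * t))) := by
    simp_rw [hpt]
    rw [MeasureTheory.integral_const_mul, MeasureTheory.integral_add hintp hintm]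
  -- norm of the prefactor
  have hpre : ‖(Complex.I * ((lam : ℂ) + Complex.I * (δ : ℂ)))⁻¹‖ ≤ lam⁻¹ := by
    rw [norm_inv]
    apply inv_anti₀ hlam0
    calc lam = |((lam : ℂ) + Complex.I * (δ : ℂ)).re| := by
          simp [abs_of_pos hlam0]
    _ ≤ ‖(lam : ℂ) + Complex.I * (δ : ℂ)‖ := Complex.abs_re_le_norm _
    _ = ‖Complex.I * ((lam : ℂ) + Complex.I * (δ : ℂ))‖ := by
          rw [norm_mul, Complex.norm_I, one_mul]
  -- bounds for the two pieces
  have hboundp : ‖∫ t in Set.Ioi (0:ℝ), β ((2:ℝ) ^ (-j) * t) * Complex.exp (zp * t)‖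
      ≤ C0 * (2:ℝ) ^ j * (2 ^ N * ((1 + (2:ℝ) ^ j * |τ - lam|) ^ N)⁻¹) := by
    refine le_trans (hC0 j zp hzpne (by rw [hzpre]; linarith)) ?_
    apply mul_le_mul_of_nonneg_left ?_ (by positivity)
    exact min_bound (by positivity) (mul_le_mul_of_nonneg_left hzpge h2j.le) N
  have hboundm : ‖∫ t in Set.Ioi (0:ℝ), β ((2:ℝ) ^ (-j) * t) * Complex.exp (zm * t)‖
      ≤ C0 * (2:ℝ) ^ j * (2 ^ N * ((1 + (2:ℝ) ^ j * |τ - lam|) ^ N)⁻¹) := by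
    refine le_trans (hC0 j zm hzmne (by rw [hzmre]; linarith)) ?_
    apply mul_le_mul_of_nonneg_left ?_ (by positivity)
    exact min_bound (by positivity) (mul_le_mul_of_nonneg_left hzmge h2j.le) N
  rw [msymC, norm_mul, hsplit, norm_mul]
  have h2inv : ‖(2:ℂ)⁻¹‖ = 2⁻¹ := by
    rw [norm_inv]; norm_num
  rw [h2inv]
  have hnn : (0:ℝ) ≤ 2⁻¹ * ‖(∫ t in Set.Ioi (0:ℝ), β ((2:ℝ) ^ (-j) * t) * Complex.exp (zp * t))
      + (∫ t in Set.Ioi (0:ℝ), β ((2:ℝ) ^ (-j) * t) * Complex.exp (zm * t))‖ := by positivity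
  calc ‖(Complex.I * ((lam : ℂ) + Complex.I * (δ : ℂ)))⁻¹‖ *
      (2⁻¹ * ‖(∫ t in Set.Ioi (0:ℝ), β ((2:ℝ) ^ (-j) * t) * Complex.exp (zp * t))
        + (∫ t in Set.Ioi (0:ℝ), β ((2:ℝ) ^ (-j) * t) * Complex.exp (zm * t))‖)
      ≤ lam⁻¹ * (2⁻¹ * ‖(∫ t in Set.Ioi (0:ℝ), β ((2:ℝ) ^ (-j) * t) * Complex.exp (zp * t))
        + (∫ t in Set.Ioi (0:ℝ), β ((2:ℝ) ^ (-j) * t) * Complex.exp (zm * t))‖) :=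
        mul_le_mul_of_nonneg_right hpre hnn
    _ ≤ lam⁻¹ * (2⁻¹ * (C0 * (2:ℝ) ^ j * (2 ^ N * ((1 + (2:ℝ) ^ j * |τ - lam|) ^ N)⁻¹)
        + C0 * (2:ℝ) ^ j * (2 ^ N * ((1 + (2:ℝ) ^ j * |τ - lam|) ^ N)⁻¹))) := by
        apply mul_le_mul_of_nonneg_left ?_ (by positivity)
        apply mul_le_mul_of_nonneg_left ?_ (by norm_num)
        exact le_trans (norm_add_le _ _) (add_le_add hboundp hboundm)
    _ = C0 * 2 ^ N * lam⁻¹ * (2:ℝ) ^ j * ((1 + (2:ℝ) ^ j * |τ - lam|) ^ N)⁻¹ := by ring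
end
end

section
/- Let A ≥ 0 and c₁ > 0. Let a : ℝ → ℝ be twice continuously differentiable with 0 ≤ a(r) ≤ 1 and a'(r) ≤ 0 for all r, a(r) = 1 for r ≤ A + 1/2, and a(r) = 0 for r ≥ A + 1. Let f : ℝ × ℝ → ℝ, written f(r, θ), be twice continuously differentiable in r, and assume that for all r ∈ [A, A+1] and all θ: ∂²_r f(r, θ) > 0, ∂_r f(r, θ) ≤ c₁ cosh(c₁ r), f(r, θ) ≤ sinh(c₁ r), and, whenever a''(r) > 0, (1 − a(r)) c₁² sinh(c₁ r) > a''(r)(sinh(c₁ r) − f(r, θ)). Then the function f̃(r, θ) = (1 − a(r)) sinh(c₁ r) + a(r) f(r, θ) satisfies ∂²_r f̃(r, θ) > 0 for all r ≥ A and all θ. -/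
/-- Negative curvature of the glued background surface:
if `a` is a nonincreasing `C²` cutoff with `a ≡ 1` for `r ≤ A + 1/2` and `a ≡ 0` for
`r ≥ A + 1`, and `f(·, θ)` is `C²` with `∂²_r f > 0`, `∂_r f ≤ c₁ cosh(c₁ r)`,
`f ≤ sinh(c₁ r)` on `[A, A+1]`, and `(1 − a) c₁² sinh(c₁ r) > a''(sinh(c₁ r) − f)`
whenever `a'' > 0`, then `f̃(r,θ) = (1 − a(r)) sinh(c₁ r) + a(r) f(r,θ)` satisfies
`∂²_r f̃(r,θ) > 0` for all `r ≥ A` and all `θ`. -/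
theorem statement19
    (A c₁ : ℝ) (hA : 0 ≤ A) (hc₁ : 0 < c₁)
    (a : ℝ → ℝ) (ha : ContDiff ℝ 2 a)
    (ha0 : ∀ r, 0 ≤ a r) (ha1 : ∀ r, a r ≤ 1)
    (ha' : ∀ r, deriv a r ≤ 0)
    (haone : ∀ r, r ≤ A + 1/2 → a r = 1)
    (hazero : ∀ r, A + 1 ≤ r → a r = 0)
    (f : ℝ → ℝ → ℝ) (hf : ∀ θ, ContDiff ℝ 2 (fun r => f r θ))
    (hfrr : ∀ r ∈ Set.Icc A (A + 1), ∀ θ, 0 < deriv (deriv (fun r => f r θ)) r)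
    (hfr : ∀ r ∈ Set.Icc A (A + 1), ∀ θ,
      deriv (fun r => f r θ) r ≤ c₁ * Real.cosh (c₁ * r))
    (hfs : ∀ r ∈ Set.Icc A (A + 1), ∀ θ, f r θ ≤ Real.sinh (c₁ * r))
    (hcond : ∀ r ∈ Set.Icc A (A + 1), ∀ θ, 0 < deriv (deriv a) r →
      deriv (deriv a) r * (Real.sinh (c₁ * r) - f r θ) <
        (1 - a r) * c₁ ^ 2 * Real.sinh (c₁ * r)) :
    ∀ r, A ≤ r → ∀ θ,
      0 < deriv (deriv (fun r => (1 - a r) * Real.sinh (c₁ * r) + a r * f r θ)) r := by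
  intro r hr θ
  -- basic objects
  set s : ℝ → ℝ := fun x => Real.sinh (c₁ * x) with hs_def
  set u : ℝ → ℝ := fun x => f x θ - s x with hu_def
  have hg : (fun x => (1 - a x) * Real.sinh (c₁ * x) + a x * f x θ)
      = fun x => s x + a x * u x := by
    funext x; simp only [hs_def, hu_def]; ring
  rw [hg]
  -- derivatives of s
  have hs1 : ∀ x, HasDerivAt s (c₁ * Real.cosh (c₁ * x)) x := fun x => by
    have h := ((hasDerivAt_id x).const_mul c₁).sinh
    simp only [id_eq, id, mul_one] at h
    rw [mul_comm c₁ (Real.cosh _)]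
    exact h
  have hds : deriv s = fun x => c₁ * Real.cosh (c₁ * x) := funext fun x => (hs1 x).deriv
  have hs2 : ∀ x, HasDerivAt (deriv s) (c₁ ^ 2 * Real.sinh (c₁ * x)) x := fun x => by
    rw [hds]
    have := (((hasDerivAt_id x).const_mul c₁).cosh).const_mul c₁
    simp only [id_eq, id, mul_one] at this
    exact this.congr_deriv (by ring)
  -- smoothness bookkeeping
  have hcd : ∀ b : ℝ → ℝ, ContDiff ℝ 2 b → Differentiable ℝ b ∧ Differentiable ℝ (deriv b) := by
    intro b hb
    refine ⟨hb.differentiable (by norm_num), ?_⟩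
    have : ContDiff ℝ ((1 : ℕ) + 1) b := by exact_mod_cast hb
    exact (contDiff_succ_iff_deriv.mp this).2.2.differentiable (by norm_num)
  have hscd : ContDiff ℝ 2 s :=
    (Real.contDiff_sinh.of_le le_top).comp (contDiff_const.mul contDiff_id)
  have hucd : ContDiff ℝ 2 u := (hf θ).sub hscd
  obtain ⟨hda, hda'⟩ := hcd a ha
  obtain ⟨hdu, hdu'⟩ := hcd u hucd
  obtain ⟨hdf, hdf'⟩ := hcd _ (hf θ)
  obtain ⟨hds0, hds'⟩ := hcd s hscd
  -- first derivative of g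
  have h1 : ∀ x, HasDerivAt (fun x => s x + a x * u x)
      (c₁ * Real.cosh (c₁ * x) + (deriv a x * u x + a x * deriv u x)) x := fun x =>
    (hs1 x).add (((hda x).hasDerivAt).mul ((hdu x).hasDerivAt))
  have hdg : deriv (fun x => s x + a x * u x)
      = fun x => deriv s x + (deriv a x * u x + a x * deriv u x) := by
    funext x; rw [(h1 x).deriv, hds]
  -- second derivative at r
  have h2 : HasDerivAt (fun x => deriv s x + (deriv a x * u x + a x * deriv u x))
      (c₁ ^ 2 * Real.sinh (c₁ * r) +
        ((deriv (deriv a) r * u r + deriv a r * deriv u r) +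
         (deriv a r * deriv u r + a r * deriv (deriv u) r))) r := by
    have t1 : HasDerivAt (fun x => deriv a x * u x)
        (deriv (deriv a) r * u r + deriv a r * deriv u r) r :=
      ((hda' r).hasDerivAt).mul ((hdu r).hasDerivAt)
    have t2 : HasDerivAt (fun x => a x * deriv u x)
        (deriv a r * deriv u r + a r * deriv (deriv u) r) r :=
      ((hda r).hasDerivAt).mul ((hdu' r).hasDerivAt)
    exact (hs2 r).add (t1.add t2)
  have key : deriv (deriv (fun x => s x + a x * u x)) r
      = c₁ ^ 2 * Real.sinh (c₁ * r) + deriv (deriv a) r * u r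
        + 2 * deriv a r * deriv u r + a r * deriv (deriv u) r := by
    rw [hdg, h2.deriv]; ring
  rw [key]
  -- express derivatives of u
  have hu1 : ∀ x, deriv u x = deriv (fun r => f r θ) x - c₁ * Real.cosh (c₁ * x) := by
    intro x
    have : HasDerivAt u (deriv (fun r => f r θ) x - c₁ * Real.cosh (c₁ * x)) x :=
      ((hdf x).hasDerivAt).sub (hs1 x)
    exact this.deriv
  have hu2 : deriv (deriv u) r
      = deriv (deriv (fun r => f r θ)) r - c₁ ^ 2 * Real.sinh (c₁ * r) := by
    have heq : deriv u = fun x => deriv (fun r => f r θ) x - deriv s x := by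
      funext x; rw [hu1 x, hds]
    rw [heq]
    have : HasDerivAt (fun x => deriv (fun r => f r θ) x - deriv s x)
        (deriv (deriv (fun r => f r θ)) r - c₁ ^ 2 * Real.sinh (c₁ * r)) r :=
      ((hdf' r).hasDerivAt).sub (hs2 r)
    exact this.deriv
  -- split into cases
  rcases le_or_gt r (A + 1) with hr1 | hr1
  · -- r in the collar
    have hrI : r ∈ Set.Icc A (A + 1) := ⟨hr, hr1⟩
    have hsinh_nonneg : 0 ≤ Real.sinh (c₁ * r) :=
      Real.sinh_nonneg_iff.2 (mul_nonneg hc₁.le (hA.trans hr))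
    have hfsr := hfs r hrI θ
    have hfrr' := hfrr r hrI θ
    have hfr' := hfr r hrI θ
    have hT3 : 0 ≤ 2 * deriv a r * deriv u r := by
      rw [hu1 r]
      have : deriv (fun r => f r θ) r - c₁ * Real.cosh (c₁ * r) ≤ 0 := by linarith
      have h2a : 2 * deriv a r ≤ 0 := by linarith [ha' r]
      nlinarith
    have hT4 : 0 ≤ a r * deriv (deriv u) r + a r * c₁ ^ 2 * Real.sinh (c₁ * r) := by
      rw [hu2]
      have : a r * (deriv (deriv u) r + c₁ ^ 2 * Real.sinh (c₁ * r))
          = a r * deriv (deriv (fun r => f r θ)) r := by rw [hu2]; ring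
      have h4 : 0 ≤ a r * deriv (deriv (fun r => f r θ)) r :=
        mul_nonneg (ha0 r) hfrr'.le
      nlinarith [ha0 r]
    -- main split on sign of a''
    rcases lt_or_ge 0 (deriv (deriv a) r) with ha2 | ha2
    · have hc := hcond r hrI θ ha2
      have hT12 : 0 < (1 - a r) * c₁ ^ 2 * Real.sinh (c₁ * r) + deriv (deriv a) r * u r := by
        have : deriv (deriv a) r * u r = -(deriv (deriv a) r * (Real.sinh (c₁ * r) - f r θ)) := by
          simp only [hu_def, hs_def]; ring
        linarith
      have hsplit : c₁ ^ 2 * Real.sinh (c₁ * r) + deriv (deriv a) r * u r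
            + 2 * deriv a r * deriv u r + a r * deriv (deriv u) r
          = ((1 - a r) * c₁ ^ 2 * Real.sinh (c₁ * r) + deriv (deriv a) r * u r)
            + 2 * deriv a r * deriv u r
            + (a r * deriv (deriv u) r + a r * c₁ ^ 2 * Real.sinh (c₁ * r)) := by ring
      rw [hsplit]; linarith
    · have hT2 : 0 ≤ deriv (deriv a) r * u r := by
        have hu_nonpos : u r ≤ 0 := by simp only [hu_def, hs_def]; linarith
        nlinarith
      rcases (ha0 r).lt_or_eq with hapos | haz
      · -- a r > 0, use a f'' > 0
        have hT4' : 0 < a r * deriv (deriv (fun r => f r θ)) r := mul_pos hapos hfrr'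
        have : a r * deriv (deriv u) r
            = a r * deriv (deriv (fun r => f r θ)) r - a r * c₁ ^ 2 * Real.sinh (c₁ * r) := by
          rw [hu2]; ring
        have hone : 0 ≤ (1 - a r) * (c₁ ^ 2 * Real.sinh (c₁ * r)) :=
          mul_nonneg (by linarith [ha1 r]) (mul_nonneg (sq_nonneg c₁) hsinh_nonneg)
        nlinarith
      · -- a r = 0, so r > A + 1/2 and sinh > 0
        have hrhalf : A + 1/2 < r := by
          by_contra hle
          have := haone r (le_of_not_gt hle)
          rw [← haz] at this; norm_num at this
        have hrpos : 0 < r := by linarith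
        have hsinh_pos : 0 < Real.sinh (c₁ * r) := Real.sinh_pos_iff.2 (mul_pos hc₁ hrpos)
        have hT1 : 0 < c₁ ^ 2 * Real.sinh (c₁ * r) :=
          mul_pos (pow_pos hc₁ 2) hsinh_pos
        have haz' : a r = 0 := haz.symm
        rw [haz'] at hT4 ⊢
        simp only [zero_mul] at hT4 ⊢
        linarith
  · -- r > A + 1 : the function equals s near r
    have hev : (fun x => s x + a x * u x) =ᶠ[nhds r] s := by
      filter_upwards [Ioi_mem_nhds hr1] with x hx
      rw [hazero x (le_of_lt hx)]; ring
    have : deriv (deriv (fun x => s x + a x * u x)) r = deriv (deriv s) r :=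
      (hev.deriv).deriv_eq
    rw [← key, this, (hs2 r).deriv]
    have hrpos : 0 < r := by linarith
    exact mul_pos (pow_pos hc₁ 2) (Real.sinh_pos_iff.2 (mul_pos hc₁ hrpos))
end
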